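/- For every positive integer n and every integer j with 0 <= j <= n-1, n divides C(2j, j) * sum_{k=j}^{n-1} (4k+3) * C(k,j)^2. -/

import Mathlib

open Finset

/-- The Newton-basis coefficient of the polynomial `k ↦ C(2j,j)(4k+3)C(k,j)^2`. -/
def Dcoef (j i : ℕ) : ℕ :=
  (2*j).choose j * ((4*i+3) * (i.choose j * j.choose (i-j))
    + 4*i * ((i-1).choose j * j.choose (i-1-j)))

lemma term_id (j m q : ℕ) :
    (j+m).choose j * m.choose q = (j+q).choose j * (j+m).choose (j+q) := by
  rcases le_or_gt q m with hqm | hqm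
  · have h := Nat.choose_mul (n := j+m) (k := j+q) (s := j)
      (by omega)
    rw [Nat.add_sub_cancel_left, Nat.add_sub_cancel_left] at h
    rw [← h]; ring
  · rw [Nat.choose_eq_zero_of_lt hqm,
      Nat.choose_eq_zero_of_lt (show j+m < j+q by omega), mul_zero, mul_zero]

/-- Newton expansion of `C(n,j)^2`. -/
lemma newton (j n : ℕ) :
    n.choose j * n.choose j
      = ∑ i ∈ range (2*j+1), i.choose j * j.choose (i - j) * n.choose i := by
  rcases lt_or_ge n j with h | h
  · rw [Nat.choose_eq_zero_of_lt h, zero_mul]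
    symm; apply Finset.sum_eq_zero
    intro i _
    rcases lt_or_ge i j with h2 | h2
    · rw [Nat.choose_eq_zero_of_lt h2, zero_mul, zero_mul]
    · rw [Nat.choose_eq_zero_of_lt (lt_of_lt_of_le h h2), mul_zero]
  · obtain ⟨m, rfl⟩ := Nat.exists_eq_add_of_le h
    have hsplit : ∑ i ∈ range (2*j+1), i.choose j * j.choose (i - j) * (j+m).choose i
        = ∑ q ∈ range (j+1), (j+q).choose j * j.choose q * (j+m).choose (j+q) := by
      have h1 : ∑ i ∈ range (2*j+1), i.choose j * j.choose (i-j) * (j+m).choose i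
          = ∑ i ∈ Ico j (2*j+1), i.choose j * j.choose (i-j) * (j+m).choose i := by
        refine (Finset.sum_subset ?_ ?_).symm
        · intro x hx; simp only [mem_Ico] at hx; simp only [mem_range]; omega
        · intro x hx hnx
          simp only [mem_range] at hx
          simp only [mem_Ico, not_and, not_le] at hnx
          have hxj : x < j := by
            by_contra hc
            push_neg at hc
            exact absurd (hnx hc) (by omega)
          rw [Nat.choose_eq_zero_of_lt hxj, zero_mul, zero_mul]
      rw [h1, Finset.sum_Ico_eq_sum_range]
      have hr : 2*j+1-j = j+1 := by omega
      rw [hr]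
      exact Finset.sum_congr rfl fun q _ => by rw [Nat.add_sub_cancel_left]
    rw [hsplit]
    have hstep1 : (j+m).choose j * (j+m).choose j
        = ∑ k ∈ range (j+1), (j+m).choose j * (j.choose k * m.choose (j-k)) := by
      nth_rewrite 2 [Nat.add_choose_eq]
      rw [Finset.mul_sum, Finset.Nat.sum_antidiagonal_eq_sum_range_succ_mk]
    rw [hstep1]
    have hstep2 : ∀ k ∈ range (j+1),
        (j+m).choose j * (j.choose k * m.choose (j-k))
          = (j+(j-k)).choose j * j.choose (j-k) * (j+m).choose (j+(j-k)) := by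
      intro k hk
      simp only [mem_range] at hk
      have hkj : k ≤ j := by omega
      have hsym : j.choose (j-k) = j.choose k := Nat.choose_symm hkj
      have h2 := term_id j m (j-k)
      calc (j+m).choose j * (j.choose k * m.choose (j-k))
          = j.choose (j-k) * ((j+m).choose j * m.choose (j-k)) := by rw [hsym]; ring
        _ = j.choose (j-k) * ((j+(j-k)).choose j * (j+m).choose (j+(j-k))) := by rw [h2]
        _ = (j+(j-k)).choose j * j.choose (j-k) * (j+m).choose (j+(j-k)) := by ring
    rw [Finset.sum_congr rfl hstep2]
    have hrefl := Finset.sum_range_reflect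
      (fun q => (j+q).choose j * j.choose q * (j+m).choose (j+q)) (j+1)
    simp only [Nat.add_sub_cancel] at hrefl
    exact hrefl

lemma ptwise (n i : ℕ) :
    (4*i+3) * n.choose i + 4*(i+1) * n.choose (i+1) = (4*n+3) * n.choose i := by
  rcases le_or_gt i n with h | h
  · have h1 : n.choose (i+1) * (i+1) = n.choose i * (n-i) := Nat.choose_succ_right_eq n i
    have h2 : 4*(i+1) * n.choose (i+1) = 4*(n-i) * n.choose i := by
      calc 4*(i+1) * n.choose (i+1) = 4 * (n.choose (i+1) * (i+1)) := by ring
        _ = 4 * (n.choose i * (n-i)) := by rw [h1]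
        _ = 4*(n-i) * n.choose i := by ring
    rw [h2, ← Nat.add_mul]
    congr 1
    omega
  · rw [Nat.choose_eq_zero_of_lt h, Nat.choose_eq_zero_of_lt (by omega)]
    simp

/-- Master identity: the sum equals a combination of `C(n, i+1)`. -/
lemma master (j n : ℕ) :
    (2*j).choose j * ∑ k ∈ range n, (4*k+3) * (k.choose j * k.choose j)
      = ∑ i ∈ range (2*j+2), Dcoef j i * n.choose (i+1) := by
  induction n with
  | zero =>
      simp
  | succ n ih =>
      rw [Finset.sum_range_succ, Nat.mul_add, ih]
      have hR : ∑ i ∈ range (2*j+2), Dcoef j i * (n+1).choose (i+1)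
          = (∑ i ∈ range (2*j+2), Dcoef j i * n.choose (i+1))
            + ∑ i ∈ range (2*j+2), Dcoef j i * n.choose i := by
        rw [← Finset.sum_add_distrib]
        apply Finset.sum_congr rfl
        intro i _
        rw [Nat.choose_succ_succ n i]
        ring
      rw [hR]
      congr 1
      unfold Dcoef
      have hsplit : ∑ i ∈ range (2*j+2),
          ((2*j).choose j * ((4*i+3) * (i.choose j * j.choose (i-j))
            + 4*i * ((i-1).choose j * j.choose (i-1-j)))) * n.choose i
          = (∑ i ∈ range (2*j+2),
              (2*j).choose j * ((4*i+3) * (i.choose j * j.choose (i-j))) * n.choose i)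
            + ∑ i ∈ range (2*j+2),
              (2*j).choose j * (4*i * ((i-1).choose j * j.choose (i-1-j))) * n.choose i := by
        rw [← Finset.sum_add_distrib]
        apply Finset.sum_congr rfl
        intro i _
        ring
      rw [hsplit]
      have hshift : ∑ i ∈ range (2*j+2),
          (2*j).choose j * (4*i * ((i-1).choose j * j.choose (i-1-j))) * n.choose i
          = ∑ i ∈ range (2*j+1),
            (2*j).choose j * (4*(i+1) * (i.choose j * j.choose (i-j))) * n.choose (i+1) := by
        rw [Finset.sum_range_succ' _ (2*j+1)]
        simp
      rw [hshift]
      have hlast : ∑ i ∈ range (2*j+2),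
          (2*j).choose j * ((4*i+3) * (i.choose j * j.choose (i-j))) * n.choose i
          = ∑ i ∈ range (2*j+1),
            (2*j).choose j * ((4*i+3) * (i.choose j * j.choose (i-j))) * n.choose i := by
        rw [Finset.sum_range_succ]
        have h0 : j.choose (2*j+1-j) = 0 := Nat.choose_eq_zero_of_lt (by omega)
        rw [h0]
        simp
      rw [hlast, ← Finset.sum_add_distrib]
      have hcomb : ∀ i ∈ range (2*j+1),
          (2*j).choose j * ((4*i+3) * (i.choose j * j.choose (i-j))) * n.choose i
            + (2*j).choose j * (4*(i+1) * (i.choose j * j.choose (i-j))) * n.choose (i+1)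
          = (2*j).choose j * (4*n+3) * (i.choose j * j.choose (i-j) * n.choose i) := by
        intro i _
        have h := ptwise n i
        calc (2*j).choose j * ((4*i+3) * (i.choose j * j.choose (i-j))) * n.choose i
              + (2*j).choose j * (4*(i+1) * (i.choose j * j.choose (i-j))) * n.choose (i+1)
            = (2*j).choose j * (i.choose j * j.choose (i-j))
                * ((4*i+3) * n.choose i + 4*(i+1) * n.choose (i+1)) := by ring
          _ = (2*j).choose j * (i.choose j * j.choose (i-j)) * ((4*n+3) * n.choose i) := by
              rw [h]
          _ = (2*j).choose j * (4*n+3) * (i.choose j * j.choose (i-j) * n.choose i) := by ring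
      rw [Finset.sum_congr rfl hcomb, ← Finset.mul_sum, ← newton]
      ring

lemma catalan_dvd (j : ℕ) : (j+1) ∣ (2*j).choose j := by
  have := Nat.succ_dvd_centralBinom j
  rwa [Nat.centralBinom, Nat.two_mul, ← Nat.two_mul] at this

/-- Key divisibility of the Newton coefficients. -/
lemma key_dvd (j i : ℕ) : (i+1) ∣ Dcoef j i := by
  rcases lt_or_ge i j with h | h
  · have h1 : i.choose j = 0 := Nat.choose_eq_zero_of_lt h
    have h2 : (i-1).choose j = 0 := Nat.choose_eq_zero_of_lt (by omega)
    unfold Dcoef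
    rw [h1, h2]
    simp
  obtain ⟨d, rfl⟩ := Nat.exists_eq_add_of_le h
  rcases Nat.eq_zero_or_pos d with rfl | hd1
  · -- d = 0
    obtain ⟨c, hc⟩ := catalan_dvd j
    rcases Nat.eq_zero_or_pos j with rfl | hj
    · simp [Dcoef]
    · have h2 : (j+0-1).choose j = 0 := Nat.choose_eq_zero_of_lt (by omega)
      unfold Dcoef
      rw [h2, hc]
      refine ⟨c * ((4*(j+0)+3) * ((j+0).choose j * j.choose (j+0-j))
        + 4*(j+0) * (0 * j.choose (j+0-1-j))), ?_⟩
      have he : j + 0 + 1 = j + 1 := by omega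
      rw [he]
      ring
  rcases lt_or_ge j d with hdj | hdj
  · rcases Nat.lt_or_ge d (j+2) with hdj2 | hdj2
    · -- d = j+1
      have hd : d = j+1 := by omega
      subst hd
      have h1 : j.choose (j+(j+1)-j) = 0 := by
        rw [Nat.add_sub_cancel_left]; exact Nat.choose_eq_zero_of_lt (by omega)
      have h2 : j+(j+1)-1-j = j := by omega
      have h3 : j+(j+1)-1 = 2*j := by omega
      obtain ⟨c, hc⟩ := catalan_dvd j
      unfold Dcoef
      rw [h1, h2, h3, Nat.choose_self, hc]
      refine ⟨2*(2*j+1)*(j+1)*c*c, ?_⟩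
      have he : j + (j+1) + 1 = 2*(j+1) := by ring
      rw [he]
      ring
    · -- d ≥ j+2 : both terms vanish
      have h1 : j.choose (j+d-j) = 0 := by
        rw [Nat.add_sub_cancel_left]; exact Nat.choose_eq_zero_of_lt (by omega)
      have h2 : j.choose (j+d-1-j) = 0 := by
        have he : j+d-1-j = d-1 := by omega
        rw [he]; exact Nat.choose_eq_zero_of_lt (by omega)
      unfold Dcoef
      rw [h1, h2]
      simp
  · -- main case 1 ≤ d ≤ j
    have hj1 : 1 ≤ j := le_trans hd1 hdj
    set i := j + d with hi
    set s := j - d with hs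
    set a := (2*j).choose s with ha
    set b := (2*j).choose (s+1) with hb
    set u := i.choose j with hu
    set w := (i-1).choose j with hw
    -- Dcoef in product form
    have hDfac : Dcoef j i = (4*i+3) * (u * (a * u)) + 4*i * (w * (b * w)) := by
      have e1 : i - j = d := by omega
      have e2 : i - 1 - j = d - 1 := by omega
      have t1 : (2*j).choose j * j.choose d = a * u := by
        have h := Nat.choose_mul (n := 2*j) (k := j+d) (s := j) (by omega)
        have s1 : (2*j).choose (j+d) = a := by
          rw [ha, ← Nat.choose_symm (show j+d ≤ 2*j by omega)]
          congr 1; omega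
        have s2 : (j+d).choose j = u := by rw [hu]
        have s3 : 2*j - j = j := by omega
        have s4 : j + d - j = d := by omega
        rw [s1, s2, s3, s4] at h
        rw [← h]
      have t2 : (2*j).choose j * j.choose (d-1) = b * w := by
        have h := Nat.choose_mul (n := 2*j) (k := j+(d-1)) (s := j) (by omega)
        have s1 : (2*j).choose (j+(d-1)) = b := by
          rw [hb, ← Nat.choose_symm (show j+(d-1) ≤ 2*j by omega)]
          congr 1; omega
        have s2 : (j+(d-1)).choose j = w := by
          rw [hw]; congr 1; omega
        have s3 : 2*j - j = j := by omega
        have s4 : j + (d-1) - j = d - 1 := by omega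
        rw [s1, s2, s3, s4] at h
        rw [← h]
      unfold Dcoef
      rw [e1, e2]
      calc (2*j).choose j * ((4*i+3) * (i.choose j * j.choose d)
              + 4*i * ((i-1).choose j * j.choose (d-1)))
          = (4*i+3) * (i.choose j * ((2*j).choose j * j.choose d))
            + 4*i * ((i-1).choose j * ((2*j).choose j * j.choose (d-1))) := by ring
        _ = (4*i+3) * (u * (a * u)) + 4*i * (w * (b * w)) := by
            rw [t1, t2, hu, hw]
    -- exact auxiliary identities in ℕ
    have f2 : (s+1) * b = i * a := by
      have h := Nat.choose_succ_right_eq (2*j) s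
      have s1 : 2*j - s = j + d := by omega
      rw [s1] at h
      rw [hb, ha]
      calc (s+1) * (2*j).choose (s+1) = (2*j).choose (s+1) * (s+1) := by ring
        _ = (2*j).choose s * (j+d) := h
        _ = i * (2*j).choose s := by rw [hi]; ring
    have f1 : ∃ a' : ℕ, s * a = (i+1) * a' := by
      rcases Nat.eq_zero_or_pos s with hs0 | hs0
      · exact ⟨0, by rw [hs0, zero_mul, mul_zero]⟩
      · refine ⟨(2*j).choose (s-1), ?_⟩
        have h := Nat.choose_succ_right_eq (2*j) (s-1)
        have s1 : s - 1 + 1 = s := by omega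
        have s2 : 2*j - (s-1) = i + 1 := by omega
        rw [s1, s2] at h
        rw [ha]
        calc s * (2*j).choose s = (2*j).choose s * s := by ring
          _ = (2*j).choose (s-1) * (i+1) := h
          _ = (i+1) * (2*j).choose (s-1) := by ring
    obtain ⟨a', f1⟩ := f1
    have f3 : i * w = d * u := by
      have h := Nat.add_one_mul_choose_eq (i-1) (d-1)
      have s1 : i-1+1 = i := by omega
      have s2 : d-1+1 = d := by omega
      rw [s1, s2] at h
      have s3 : (i-1).choose (d-1) = w := by
        rw [hw, ← Nat.choose_symm (show j ≤ i - 1 by omega)]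
        congr 1; omega
      have s4 : i.choose d = u := by
        rw [hu, ← Nat.choose_symm (show j ≤ i by omega)]
        congr 1; omega
      rw [s3, s4] at h
      rw [h]; ring
    have his : i = 2*d + s := by omega
    -- pass to ZMod (i+1)
    rw [← ZMod.natCast_eq_zero_iff]
    rw [hDfac]
    push_cast
    set Z := ZMod (i+1) with hZ
    have hm : (i : Z) + 1 = 0 := by
      have h0 : ((i+1 : ℕ) : Z) = 0 := ZMod.natCast_self (i+1)
      push_cast at h0
      exact h0
    have h1c : (s : Z) * a = ((i : Z) + 1) * a' := by have h := congrArg (Nat.cast : ℕ → ZMod (i+1)) f1; push_cast at h; exact h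
    have h2c : ((s : Z) + 1) * b = (i : Z) * a := by have h := congrArg (Nat.cast : ℕ → ZMod (i+1)) f2; push_cast at h; exact h
    have h3c : (i : Z) * w = (d : Z) * u := by have h := congrArg (Nat.cast : ℕ → ZMod (i+1)) f3; push_cast at h; exact h
    have h4c : (i : Z) = 2 * d + s := by have h := congrArg (Nat.cast : ℕ → ZMod (i+1)) his; push_cast at h; exact h
    linear_combination
      (4*(u:Z)^2*a + 4*(d:Z)*u*b*w + (u:Z)^2*(1+(s:Z))*((b:Z)-a)
        - (u:Z)^2*(2*(d:Z)*b - a')) * hm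
      + (u:Z)^2 * h1c
      + (-((u:Z)^2*(1+(s:Z)))) * h2c
      + (4*(b:Z)*w - 4*(d:Z)*u*b) * h3c
      + (-((u:Z)^2*(1+(s:Z))*b) + 2*(d:Z)*b*(u:Z)^2) * h4c

theorem stmt_13 (n j : ℕ) (hn : 0 < n) (hj : j ≤ n - 1) :
    n ∣ (2 * j).choose j * ∑ k ∈ Finset.Ico j n, (4 * k + 3) * (k.choose j) ^ 2 := by
  have hext : ∑ k ∈ Finset.Ico j n, (4*k+3) * (k.choose j) ^ 2
      = ∑ k ∈ range n, (4*k+3) * (k.choose j * k.choose j) := by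
    rw [show (Finset.Ico j n) = Finset.Ico j n from rfl]
    have h1 : ∀ k, (4*k+3) * (k.choose j) ^ 2 = (4*k+3) * (k.choose j * k.choose j) := by
      intro k; rw [pow_two]
    simp_rw [h1]
    refine Finset.sum_subset ?_ ?_
    · intro x hx; simp only [mem_Ico] at hx; simp only [mem_range]; omega
    · intro x hx hnx
      simp only [mem_range] at hx
      simp only [mem_Ico, not_and, not_le] at hnx
      have hxj : x < j := by
        by_contra hc
        push_neg at hc
        exact absurd (hnx hc) (by omega)
      rw [Nat.choose_eq_zero_of_lt hxj, mul_zero, mul_zero]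
  rw [hext, master]
  apply Finset.dvd_sum
  intro i _
  obtain ⟨e, he⟩ := key_dvd j i
  have hid : (i+1) * n.choose (i+1) = n * (n-1).choose i := by
    have h := Nat.add_one_mul_choose_eq (n-1) i
    have s1 : n-1+1 = n := by omega
    rw [s1] at h
    rw [h]; ring
  refine ⟨e * (n-1).choose i, ?_⟩
  calc Dcoef j i * n.choose (i+1) = e * ((i+1) * n.choose (i+1)) := by rw [he]; ring
    _ = e * (n * (n-1).choose i) := by rw [hid]
    _ = n * (e * (n-1).choose i) := by ring
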